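/- Let G = (V, E) be a hypergraph, let I* ∈ E, let E' := E \ {I*}, and let G' := (V, E'). Then the orthogonal projection of flowerRel(G) onto the coordinates indexed by E' ∪ S equals flowerRel(G'). -/

import Mathlib

open Finset

/-- A set `I` is a singleton `{v}`. -/
def IsSingleton {V : Type} (I : Finset V) : Prop := ∃ v : V, I = {v}

instance {V : Type} [DecidableEq V] [Fintype V] (I : Finset V) :
    Decidable (IsSingleton I) :=
  inferInstanceAs (Decidable (∃ v : V, I = {v}))

/-- The successors of node `I` in the arc set `A`. -/
def succOf {V : Type} [DecidableEq V] (A : Finset (Finset V × Finset V))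
    (I : Finset V) : Finset (Finset V) :=
  (A.filter fun a => a.1 = I).image Prod.snd

/-- A recursive linearization over the finite ground set `V`: a simple digraph whose
nodes are nonempty subsets of `V` including all singletons, where each arc goes from a
set to a subset, and the successors of every non-singleton node cover it. -/
structure RecLin (V : Type) [Fintype V] [DecidableEq V] where
  nodes : Finset (Finset V)
  arcs : Finset (Finset V × Finset V)
  arcs_fst_mem : ∀ a ∈ arcs, a.1 ∈ nodes
  arcs_snd_mem : ∀ a ∈ arcs, a.2 ∈ nodes
  no_loops : ∀ a ∈ arcs, a.1 ≠ a.2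
  singleton_mem : ∀ v : V, ({v} : Finset V) ∈ nodes
  nodes_nonempty : ∀ I ∈ nodes, I.Nonempty
  arcs_subset : ∀ a ∈ arcs, a.2 ⊆ a.1
  succ_union : ∀ I ∈ nodes, ¬ IsSingleton I → (succOf arcs I).biUnion id = I

/-- The relaxation `P(D)` of a recursive linearization, as a subset of `ℝ^{Finset V}`
constraining only the coordinates indexed by nodes of `D`. -/
def relax {V : Type} [Fintype V] [DecidableEq V] (D : RecLin V) :
    Set (Finset V → ℝ) :=
  { z | (∀ I ∈ D.nodes, 0 ≤ z I ∧ z I ≤ 1)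
      ∧ (∀ a ∈ D.arcs, z a.1 ≤ z a.2)
      ∧ (∀ I ∈ D.nodes, ¬ IsSingleton I →
          z I + ∑ J ∈ succOf D.arcs I, (1 - z J) ≥ 1) }

/-- The projected relaxation `P_T(D)`: the orthogonal projection of `P(D)` onto the
coordinates indexed by `T ∪ S` (`S` = singletons). -/
def projRelax {V : Type} [Fintype V] [DecidableEq V] (D : RecLin V)
    (T : Finset (Finset V)) : Set (Finset V → ℝ) :=
  { z | ∃ w ∈ relax D, ∀ I : Finset V, (I ∈ T ∨ IsSingleton I) → w I = z I }

/-- `D` is a recursive linearization of the hypergraph `G = (V, E)`. -/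
def RecLinOf {V : Type} [Fintype V] [DecidableEq V] (D : RecLin V)
    (E : Finset (Finset V)) : Prop :=
  E ⊆ D.nodes ∧ ∀ I ∈ D.nodes, (∀ a ∈ D.arcs, a.2 ≠ I) → (I ∈ E ∨ IsSingleton I)

/-- `D` is partitioning: the successors of every node are pairwise disjoint. -/
def Partitioning {V : Type} [Fintype V] [DecidableEq V] (D : RecLin V) : Prop :=
  ∀ I ∈ D.nodes, ∀ J ∈ succOf D.arcs I, ∀ J' ∈ succOf D.arcs I, J ≠ J' → J ∩ J' = ∅

/-- `D` is binary: every non-singleton node has exactly two successors. -/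
def Binary {V : Type} [Fintype V] [DecidableEq V] (D : RecLin V) : Prop :=
  ∀ I ∈ D.nodes, ¬ IsSingleton I → (succOf D.arcs I).card = 2

/-- A recursive McCormick linearization is partitioning and binary. -/
def McCormick {V : Type} [Fintype V] [DecidableEq V] (D : RecLin V) : Prop :=
  Partitioning D ∧ Binary D

/-- The extended flower relaxation of the hypergraph `G = (V, E)`, as a subset of
`ℝ^{Finset V}` constraining only the coordinates indexed by `E ∪ S`. -/
def flowerRel {V : Type} [Fintype V] [DecidableEq V] (E : Finset (Finset V)) :
    Set (Finset V → ℝ) :=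
  { z | (∀ I : Finset V, (I ∈ E ∨ IsSingleton I) → 0 ≤ z I ∧ z I ≤ 1)
      ∧ (∀ I ∈ E, ∀ v ∈ I, z I ≤ z {v})
      ∧ (∀ I ∈ E, ∀ k : ℕ, ∀ J : Fin k → Finset V,
          (∀ i, J i ∈ E ∨ IsSingleton (J i)) →
          I ⊆ Finset.univ.biUnion J →
          (∀ i, (J i ∩ I).Nonempty) →
          z I + ∑ i, (1 - z (J i)) ≥ 1) }

/-- The multilinear polytope `ML(G)`: the convex hull of the 0/1 points whose
`E`-coordinates are the products of the corresponding singleton coordinates. -/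
def ML {V : Type} [Fintype V] [DecidableEq V] (E : Finset (Finset V)) :
    Set (Finset V → ℝ) :=
  convexHull ℝ { z : Finset V → ℝ |
    (∀ I : Finset V, (I ∈ E ∨ IsSingleton I) → z I = 0 ∨ z I = 1)
    ∧ ∀ I ∈ E, z I = ∏ v ∈ I, z {v} }

section FlowerAux

lemma sum_ofFn_map' {α : Type} (n : ℕ) (J : Fin n → α) (f : α → ℝ) :
    ((List.ofFn J).map f).sum = ∑ i, f (J i) := by
  rw [List.map_ofFn, List.sum_ofFn]; rfl

lemma sum_toList_map' {α : Type} (s : Finset α) (g : α → ℝ) :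
    (s.toList.map g).sum = ∑ i ∈ s, g i := by
  rw [← Multiset.sum_coe, ← Multiset.map_coe, Finset.coe_toList, Finset.sum]

lemma map_sum_nonneg' {α : Type} (l : List α) (f : α → ℝ) (hf : ∀ a ∈ l, 0 ≤ f a) :
    0 ≤ (l.map f).sum :=
  List.sum_nonneg (by
    intro x hx; obtain ⟨b, hb, rfl⟩ := List.mem_map.mp hx; exact hf b hb)

lemma filter_map_sum_le' {α : Type} (p : α → Prop) [DecidablePred p] (l : List α) (f : α → ℝ)
    (hf : ∀ a ∈ l, 0 ≤ f a) :
    ((l.filter (fun a => p a)).map f).sum ≤ (l.map f).sum := by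
  induction l with
  | nil => simp
  | cons a l ih =>
    have h0 := hf a (by simp)
    have ih' := ih (fun b hb => hf b (by simp [hb]))
    have h2 : 0 ≤ (List.map f l).sum := map_sum_nonneg' l f (fun b hb => hf b (by simp [hb]))
    by_cases hp : p a <;> simp [List.filter_cons, hp] <;> linarith

lemma flower_list {V : Type} [Fintype V] [DecidableEq V] {E' : Finset (Finset V)}
    {z : Finset V → ℝ} (hz : z ∈ flowerRel E') {I : Finset V} (hI : I ∈ E')
    (l : List (Finset V))
    (hmem : ∀ K ∈ l, K ∈ E' ∨ IsSingleton K)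
    (hcov : ∀ v ∈ I, ∃ K ∈ l, v ∈ K)
    (hint : ∀ K ∈ l, (K ∩ I).Nonempty) :
    z I + (l.map (fun K => 1 - z K)).sum ≥ 1 := by
  obtain ⟨hb, hm, hf⟩ := hz
  have h := hf I hI l.length l.get
    (fun i => hmem _ (l.get_mem i))
    (by
      intro v hv
      obtain ⟨K, hK, hvK⟩ := hcov v hv
      obtain ⟨i, hi⟩ := List.mem_iff_get.mp hK
      exact Finset.mem_biUnion.mpr ⟨i, Finset.mem_univ _, hi ▸ hvK⟩)
    (fun i => hint _ (l.get_mem i))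
  have hs : (l.map (fun K => 1 - z K)).sum = ∑ i : Fin l.length, (1 - z (l.get i)) := by
    conv_lhs => rw [← List.ofFn_get l]
    rw [sum_ofFn_map']
  rw [hs]
  exact h

end FlowerAux

/-- the orthogonal projection of `flowerRel(G)` onto the coordinates
indexed by `E' ∪ S`, where `E' = E \ {I*}`, equals `flowerRel(G')`. -/
theorem flowerRel_projection {V : Type} [Fintype V] [DecidableEq V]
    (E : Finset (Finset V)) (hE : ∀ I ∈ E, 2 ≤ I.card)
    (Istar : Finset V) (hIstar : Istar ∈ E) :
    { z : Finset V → ℝ | ∃ w ∈ flowerRel E,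
        ∀ I : Finset V, (I ∈ E.erase Istar ∨ IsSingleton I) → w I = z I }
      = flowerRel (E.erase Istar) := by
  have hns : ¬ IsSingleton Istar := by
    rintro ⟨v, hv⟩
    have := hE _ hIstar
    rw [hv] at this
    simp at this
  ext z
  simp only [Set.mem_setOf_eq]
  constructor
  · -- easy direction: projection ⊆ flowerRel E'
    rintro ⟨w, ⟨hb, hm, hf⟩, hagr⟩
    refine ⟨?_, ?_, ?_⟩
    · intro I hI
      rw [← hagr I hI]
      exact hb I (hI.imp Finset.mem_of_mem_erase id)
    · intro I hI v hv
      rw [← hagr I (Or.inl hI), ← hagr {v} (Or.inr ⟨v, rfl⟩)]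
      exact hm I (Finset.mem_of_mem_erase hI) v hv
    · intro I hI k J hJ hcov hint
      have h := hf I (Finset.mem_of_mem_erase hI) k J
        (fun i => (hJ i).imp Finset.mem_of_mem_erase id) hcov hint
      rw [hagr I (Or.inl hI)] at h
      have hs : ∑ i, (1 - w (J i)) = ∑ i, (1 - z (J i)) :=
        Finset.sum_congr rfl (fun i _ => by rw [hagr _ (hJ i)])
      rw [hs] at h
      exact h
  · -- hard direction
    intro hz
    obtain ⟨hb, hm, hf⟩ := id hz
    have hfnn : ∀ K : Finset V, (K ∈ E.erase Istar ∨ IsSingleton K) → 0 ≤ 1 - z K :=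
      fun K h => by linarith [(hb K h).2]
    set L : Set ℝ := insert 0 { r | ∃ l : List (Finset V),
      (∀ K ∈ l, K ∈ E.erase Istar ∨ IsSingleton K) ∧
      (∀ v ∈ Istar, ∃ K ∈ l, v ∈ K) ∧
      (∀ K ∈ l, (K ∩ Istar).Nonempty) ∧
      r = 1 - (l.map (fun K => 1 - z K)).sum } with hLdef
    have hL0 : (0 : ℝ) ∈ L := Set.mem_insert _ _
    have hL1 : ∀ r ∈ L, r ≤ 1 := by
      rintro r (rfl | ⟨l, h1, h2, h3, rfl⟩)
      · norm_num
      · have := map_sum_nonneg' l _ (fun K hK => hfnn K (h1 K hK))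
        linarith
    have hbdd : BddAbove L := ⟨1, fun r hr => hL1 r hr⟩
    set t : ℝ := sSup L with htdef
    have ht0 : 0 ≤ t := le_csSup hbdd hL0
    have ht1 : t ≤ 1 := csSup_le ⟨0, hL0⟩ hL1
    have htge : ∀ r ∈ L, r ≤ t := fun r hr => le_csSup hbdd hr
    -- the key upper-bound lemma
    have hub : ∀ I ∈ E.erase Istar, ∀ l₀ : List (Finset V),
        (∀ K ∈ l₀, K ∈ E.erase Istar ∨ IsSingleton K) →
        (∀ K ∈ l₀, (K ∩ I).Nonempty) →
        (∀ v ∈ I, v ∈ Istar ∨ ∃ K ∈ l₀, v ∈ K) →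
        t ≤ z I + (l₀.map (fun K => 1 - z K)).sum := by
      intro I hI l₀ h1 h2 h3
      apply csSup_le ⟨0, hL0⟩
      rintro r (rfl | ⟨l, g1, g2, g3, rfl⟩)
      · have hz0 := (hb I (Or.inl hI)).1
        have := map_sum_nonneg' l₀ _ (fun K hK => hfnn K (h1 K hK))
        linarith
      · have key := flower_list hz hI
          (l₀ ++ l.filter (fun K => (K ∩ I).Nonempty))
          (by
            intro K hK
            rcases List.mem_append.mp hK with h | h
            · exact h1 K h
            · exact g1 K (List.mem_of_mem_filter h))
          (by
            intro v hv
            rcases h3 v hv with hvI | ⟨K, hK, hvK⟩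
            · obtain ⟨K, hK, hvK⟩ := g2 v hvI
              refine ⟨K, List.mem_append.mpr (Or.inr (List.mem_filter.mpr ⟨hK, ?_⟩)), hvK⟩
              simpa using ⟨v, Finset.mem_inter.mpr ⟨hvK, hv⟩⟩
            · exact ⟨K, List.mem_append.mpr (Or.inl hK), hvK⟩)
          (by
            intro K hK
            rcases List.mem_append.mp hK with h | h
            · exact h2 K h
            · simpa using (List.mem_filter.mp h).2)
        rw [List.map_append, List.sum_append] at key
        have hle := filter_map_sum_le' (fun K => (K ∩ I).Nonempty) l
          (fun K => 1 - z K) (fun K hK => hfnn K (g1 K hK))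
        linarith
    have hubx : ∀ v ∈ Istar, t ≤ z {v} := by
      intro v hv
      apply csSup_le ⟨0, hL0⟩
      rintro r (rfl | ⟨l, g1, g2, g3, rfl⟩)
      · exact (hb {v} (Or.inr ⟨v, rfl⟩)).1
      · obtain ⟨K, hK, hvK⟩ := g2 v hv
        have h1 : z K ≤ z {v} := by
          rcases g1 K hK with h | ⟨u, rfl⟩
          · exact hm K h v hvK
          · rw [Finset.mem_singleton] at hvK
            subst hvK
            exact le_refl _
        have h2 : (1 - z K) ≤ (l.map (fun K => 1 - z K)).sum :=
          List.single_le_sum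
            (by
              intro x hx
              obtain ⟨b, hb', rfl⟩ := List.mem_map.mp hx
              exact hfnn b (g1 b hb')) _
            (List.mem_map_of_mem hK)
        linarith
    -- the extension
    set w : Finset V → ℝ := Function.update z Istar t with hwdef
    have wI : w Istar = t := Function.update_self _ _ _
    have wne : ∀ K : Finset V, K ≠ Istar → w K = z K :=
      fun K h => Function.update_of_ne h _ _
    have hmem' : ∀ K : Finset V, (K ∈ E ∨ IsSingleton K) → K ≠ Istar →
        (K ∈ E.erase Istar ∨ IsSingleton K) :=
      fun K h hne => h.imp (fun hh => Finset.mem_erase.mpr ⟨hne, hh⟩) id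
    refine ⟨w, ⟨?_, ?_, ?_⟩, ?_⟩
    · -- bounds
      intro I hI
      by_cases hIs : I = Istar
      · subst hIs
        rw [wI]
        exact ⟨ht0, ht1⟩
      · rw [wne I hIs]
        exact hb I (hmem' I hI hIs)
    · -- monotonicity
      intro I hI v hv
      have hv1 : ({v} : Finset V) ≠ Istar := fun h => hns ⟨v, h.symm⟩
      rw [wne _ hv1]
      by_cases hIs : I = Istar
      · subst hIs
        rw [wI]
        exact hubx v hv
      · rw [wne I hIs]
        exact hm I (Finset.mem_erase.mpr ⟨hIs, hI⟩) v hv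
    · -- flower inequalities
      intro I hI k J hJ hcov hint
      have hcov' : ∀ v ∈ I, ∃ i : Fin k, v ∈ J i := by
        intro v hv
        obtain ⟨i, _, h⟩ := Finset.mem_biUnion.mp (hcov hv)
        exact ⟨i, h⟩
      have wbnd : ∀ i, w (J i) ≤ 1 := by
        intro i
        by_cases h : J i = Istar
        · rw [h, wI]; exact ht1
        · rw [wne _ h]; exact (hb _ (hmem' _ (hJ i) h)).2
      by_cases hIs : I = Istar
      · subst hIs
        by_cases hex : ∃ i, J i = I
        · obtain ⟨i0, hi0⟩ := hex
          have hs := Finset.single_le_sum (f := fun i => 1 - w (J i))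
            (fun i _ => by
              show (0:ℝ) ≤ 1 - w (J i)
              linarith [wbnd i]) (Finset.mem_univ i0)
          simp only [hi0, wI] at hs
          rw [wI]
          linarith
        · push_neg at hex
          have hr : (1 - ∑ i, (1 - z (J i))) ∈ L := by
            refine Set.mem_insert_iff.mpr (Or.inr ⟨List.ofFn J, ?_, ?_, ?_, ?_⟩)
            · intro K hK
              obtain ⟨i, rfl⟩ := List.mem_ofFn.mp hK
              exact hmem' _ (hJ i) (hex i)
            · intro v hv
              obtain ⟨i, h⟩ := hcov' v hv
              exact ⟨J i, List.mem_ofFn.mpr ⟨i, rfl⟩, h⟩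
            · intro K hK
              obtain ⟨i, rfl⟩ := List.mem_ofFn.mp hK
              exact hint i
            · rw [sum_ofFn_map']
          have hget := htge _ hr
          have hsum : ∑ i, (1 - w (J i)) = ∑ i, (1 - z (J i)) :=
            Finset.sum_congr rfl (fun i _ => by rw [wne _ (hex i)])
          rw [wI, hsum]
          linarith
      · have hI' : I ∈ E.erase Istar := Finset.mem_erase.mpr ⟨hIs, hI⟩
        rw [wne I hIs]
        by_cases hex : ∃ i, J i = Istar
        · obtain ⟨i0, hi0⟩ := hex
          set s : Finset (Fin k) := Finset.univ.filter (fun i => J i ≠ Istar) with hsdef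
          have hub' := hub I hI' (s.toList.map J)
            (by
              intro K hK
              obtain ⟨i, hi, rfl⟩ := List.mem_map.mp hK
              have hi' := (Finset.mem_filter.mp (Finset.mem_toList.mp hi)).2
              exact hmem' _ (hJ i) hi')
            (by
              intro K hK
              obtain ⟨i, hi, rfl⟩ := List.mem_map.mp hK
              exact hint i)
            (by
              intro v hv
              obtain ⟨i, hvi⟩ := hcov' v hv
              by_cases h : J i = Istar
              · exact Or.inl (h ▸ hvi)
              · exact Or.inr ⟨J i, List.mem_map.mpr ⟨i, Finset.mem_toList.mpr
                  (Finset.mem_filter.mpr ⟨Finset.mem_univ _, h⟩), rfl⟩, hvi⟩)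
          have hS0 : (((s.toList.map J)).map (fun K => 1 - z K)).sum
              = ∑ i ∈ s, (1 - z (J i)) := by
            rw [List.map_map, sum_toList_map']
            rfl
          rw [hS0] at hub'
          have hsplit := Finset.sum_filter_add_sum_filter_not Finset.univ
            (fun i => J i ≠ Istar) (fun i => 1 - w (J i))
          have h1 : ∑ i ∈ s, (1 - w (J i)) = ∑ i ∈ s, (1 - z (J i)) :=
            Finset.sum_congr rfl (fun i hi => by
              rw [wne _ (Finset.mem_filter.mp hi).2])
          have h2 : (1 - t) ≤ ∑ i ∈ Finset.univ.filter (fun i => ¬ J i ≠ Istar),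
              (1 - w (J i)) := by
            have hi0mem : i0 ∈ Finset.univ.filter (fun i => ¬ J i ≠ Istar) :=
              Finset.mem_filter.mpr ⟨Finset.mem_univ _, not_not.mpr hi0⟩
            have := Finset.single_le_sum (f := fun i => 1 - w (J i))
              (fun i _ => by
                show (0:ℝ) ≤ 1 - w (J i)
                linarith [wbnd i]) hi0mem
            simp only [hi0, wI] at this
            exact this
          have hsum : ∑ i ∈ s, (1 - w (J i))
              + ∑ i ∈ Finset.univ.filter (fun i => ¬ J i ≠ Istar), (1 - w (J i))
              = ∑ i, (1 - w (J i)) := hsplit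
          rw [h1] at hsum
          linarith
        · push_neg at hex
          have h := hf I hI' k J (fun i => hmem' _ (hJ i) (hex i)) hcov hint
          have hsum : ∑ i, (1 - w (J i)) = ∑ i, (1 - z (J i)) :=
            Finset.sum_congr rfl (fun i _ => by rw [wne _ (hex i)])
          rw [hsum]
          exact h
    · -- agreement
      intro I hI
      apply wne
      rcases hI with h | h
      · exact (Finset.mem_erase.mp h).1
      · rintro rfl
        exact hns h
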